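/- Let t₁ < t₂ be integers and let a₁ < a₂ < ⋯ < a_N and b₁ < b₂ < ⋯ < b_N be integers. Then the number of non-intersecting families (p₁,…,p_N) of lattice paths in which p_i goes from (t₁, a_i) to (t₂, b_i) equals det_{i,j=1,…,N}[ C(t₂−t₁, b_i − a_j) ], where C(n,k) is the binomial coefficient (equal to 0 when k < 0 or k > n). -/

import Mathlib

/-- The binomial coefficient `C(n,k)` for integer arguments, equal to `0` when `k < 0`
or `k > n`. -/
def binomZ (n k : ℤ) : ℤ := if 0 ≤ k ∧ k ≤ n then (Nat.choose n.toNat k.toNat : ℤ) else 0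

namespace LGVAux

lemma binomZ_nonneg_eq (n k : ℤ) (hn : 0 ≤ n) (hk : 0 ≤ k) :
    binomZ n k = (Nat.choose n.toNat k.toNat : ℤ) := by
  unfold binomZ
  by_cases h : k ≤ n
  · rw [if_pos ⟨hk, h⟩]
  · rw [if_neg (by tauto), Nat.choose_eq_zero_of_lt (by omega)]
    simp

lemma binomZ_pascal (n m : ℤ) (hn : 0 ≤ n) :
    binomZ (n + 1) m = binomZ n (m - 1) + binomZ n m := by
  by_cases hm : 0 ≤ m
  · rcases eq_or_lt_of_le hm with h0 | h0
    · have : m = 0 := h0.symm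
      subst this
      unfold binomZ
      rw [if_pos ⟨le_rfl, by omega⟩, if_neg (by omega), if_pos ⟨le_rfl, hn⟩]
      simp
    · rw [binomZ_nonneg_eq _ _ (by omega) hm, binomZ_nonneg_eq _ _ hn (by omega),
          binomZ_nonneg_eq _ _ hn hm]
      have h1 : (n + 1).toNat = n.toNat + 1 := by omega
      have h2 : m.toNat = (m - 1).toNat + 1 := by omega
      rw [h1, h2, Nat.choose_succ_succ]
      push_cast
      ring
  · unfold binomZ
    rw [if_neg (by omega), if_neg (by omega), if_neg (by omega)]
    ring

/-- The non-intersecting lattice-path condition. -/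
abbrev Cond (N : ℕ) (t₁ t₂ : ℤ) (a b : Fin N → ℤ) (p : Fin N → ℤ → ℤ) : Prop :=
  (∀ i r, r ≤ t₁ → p i r = a i) ∧
  (∀ i r, t₂ ≤ r → p i r = b i) ∧
  (∀ i, ∀ r ∈ Finset.Ico t₁ t₂, p i (r + 1) - p i r = 0 ∨ p i (r + 1) - p i r = 1) ∧
  (∀ i j, i ≠ j → ∀ r ∈ Finset.Icc t₁ t₂, p i r ≠ p j r)

abbrev LP (N : ℕ) (t₁ t₂ : ℤ) (a b : Fin N → ℤ) : Type :=
  {p : Fin N → ℤ → ℤ // Cond N t₁ t₂ a b p}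

variable {N : ℕ} {t₁ t₂ : ℤ} {a b : Fin N → ℤ}

lemma lower_bound {p : Fin N → ℤ → ℤ} (hp : Cond N t₁ t₂ a b p) (i : Fin N) :
    ∀ r, t₁ ≤ r → r ≤ t₂ → a i ≤ p i r := by
  intro r hr
  refine Int.le_induction (motive := fun r _ => r ≤ t₂ → a i ≤ p i r) ?_ ?_ r hr
  · intro _; rw [hp.1 i t₁ le_rfl]
  · intro s hs ih hs2
    have hstep := hp.2.2.1 i s (Finset.mem_Ico.2 ⟨hs, by omega⟩)
    have := ih (by omega)
    omega

lemma upper_bound {p : Fin N → ℤ → ℤ} (hp : Cond N t₁ t₂ a b p) (i : Fin N) :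
    ∀ r, r ≤ t₂ → t₁ ≤ r → p i r ≤ b i := by
  intro r hr
  refine Int.le_induction_down (motive := fun r _ => t₁ ≤ r → p i r ≤ b i) ?_ ?_ r hr
  · intro _; rw [hp.2.1 i t₂ le_rfl]
  · intro s hs ih h
    have hstep := hp.2.2.1 i (s - 1) (Finset.mem_Ico.2 ⟨h, by omega⟩)
    rw [sub_add_cancel] at hstep
    have := ih (by omega)
    omega

lemma path_ext (ht : t₁ ≤ t₂) {p q : Fin N → ℤ → ℤ}
    (hp : Cond N t₁ t₂ a b p) (hq : Cond N t₁ t₂ a b q)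
    (h : ∀ i, ∀ r ∈ Finset.Icc t₁ t₂, p i r = q i r) : p = q := by
  funext i r
  rcases le_or_gt r t₁ with h1 | h1
  · rw [hp.1 i r h1, hq.1 i r h1]
  rcases le_or_gt t₂ r with h2 | h2
  · rw [hp.2.1 i r h2, hq.2.1 i r h2]
  exact h i r (Finset.mem_Icc.2 ⟨by omega, by omega⟩)

lemma lp_finite (ht : t₁ ≤ t₂) : Finite (LP N t₁ t₂ a b) := by
  classical
  let F : LP N t₁ t₂ a b →
      (∀ i : Fin N, {r // r ∈ Finset.Icc t₁ t₂} → {x // x ∈ Finset.Icc (a i) (b i)}) :=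
    fun p i r => ⟨p.1 i r.1, by
      have hr := Finset.mem_Icc.1 r.2
      exact Finset.mem_Icc.2 ⟨lower_bound p.2 i r.1 hr.1 hr.2, upper_bound p.2 i r.1 hr.2 hr.1⟩⟩
  have hF : Function.Injective F := by
    intro p q hpq
    apply Subtype.ext
    refine path_ext ht p.2 q.2 (fun i r hr => ?_)
    have := congrFun (congrFun hpq i) ⟨r, hr⟩
    exact congrArg Subtype.val this
  exact Finite.of_injective F hF

lemma binomZ_zero_of_ne {x : ℤ} (h : x ≠ 0) : binomZ 0 x = 0 := by
  unfold binomZ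
  rw [if_neg (by omega)]

/-- Base case: `t₂ = t₁`. -/
lemma card_base (ha : StrictMono a) (hb : StrictMono b) :
    (Nat.card (LP N t₁ t₁ a b) : ℤ)
      = Matrix.det (Matrix.of fun i j : Fin N => binomZ 0 (b i - a j)) := by
  classical
  by_cases hab : a = b
  · subst hab
    have hcond : Cond N t₁ t₁ a a (fun i _ => a i) :=
      ⟨fun i r _ => rfl, fun i r _ => rfl,
        fun i r hr => absurd hr (by simp [Finset.mem_Ico]),
        fun i j hij r _ => ha.injective.ne hij⟩
    have hcard : Nat.card (LP N t₁ t₁ a a) = 1 := by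
      rw [Nat.card_eq_one_iff_exists]
      refine ⟨⟨fun i _ => a i, hcond⟩, fun q => ?_⟩
      apply Subtype.ext
      refine path_ext le_rfl q.2 hcond (fun i r hr => ?_)
      have hrt : r = t₁ := by simp [Finset.mem_Icc] at hr; omega
      rw [hrt, q.2.1 i t₁ le_rfl]
    rw [hcard]
    have hone : (Matrix.of fun i j : Fin N => binomZ 0 (a i - a j))
        = (1 : Matrix (Fin N) (Fin N) ℤ) := by
      ext i j
      by_cases hij : i = j
      · subst hij
        rw [Matrix.of_apply, sub_self, Matrix.one_apply_eq]
        unfold binomZ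
        rw [if_pos ⟨le_rfl, le_rfl⟩]
        simp
      · rw [Matrix.one_apply_ne hij, Matrix.of_apply,
          binomZ_zero_of_ne (sub_ne_zero.2 (ha.injective.ne hij))]
    rw [hone, Matrix.det_one]
    norm_num
  · haveI hempty : IsEmpty (LP N t₁ t₁ a b) := by
      refine ⟨fun p => hab (funext fun i => ?_)⟩
      rw [← p.2.1 i t₁ le_rfl, p.2.2.1 i t₁ le_rfl]
    rw [Nat.card_of_isEmpty]
    have hzero : (∃ i, ∀ j, b i ≠ a j) ∨ (∃ j, ∀ i, b i ≠ a j) := by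
      by_contra hcon
      push_neg at hcon
      obtain ⟨h1, h2⟩ := hcon
      have hr : Set.range b = Set.range a := by
        apply Set.eq_of_subset_of_subset
        · rintro x ⟨i, rfl⟩
          obtain ⟨j, hj⟩ := h1 i
          exact ⟨j, hj.symm⟩
        · rintro x ⟨j, rfl⟩
          obtain ⟨i, hi⟩ := h2 j
          exact ⟨i, hi⟩
      haveI : WellFoundedLT (Fin N) := inferInstance
      exact hab ((hb.range_inj ha).1 hr).symm
    rcases hzero with ⟨i, hi⟩ | ⟨j, hj⟩
    · rw [Matrix.det_eq_zero_of_row_eq_zero i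
        (fun j => binomZ_zero_of_ne (sub_ne_zero.2 (hi j)))]
      norm_num
    · rw [Matrix.det_eq_zero_of_column_eq_zero j
        (fun i => binomZ_zero_of_ne (sub_ne_zero.2 (hj i)))]
      norm_num

lemma nat_card_sigma {ι : Type*} [Fintype ι] (f : ι → Type*) [∀ i, Finite (f i)] :
    Nat.card (Σ i, f i) = ∑ i, Nat.card (f i) := by
  classical
  letI : ∀ i, Fintype (f i) := fun i => Fintype.ofFinite (f i)
  rw [Nat.card_eq_fintype_card, Fintype.card_sigma]
  exact Finset.sum_congr rfl (fun i _ => (Nat.card_eq_fintype_card).symm)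

/-- Expanding the determinant multilinearly in the rows. -/
lemma det_sum_rows (s : Fin N → Finset ℤ) (f : Fin N → ℤ → Fin N → ℤ) :
    Matrix.det (Matrix.of fun i j => ∑ x ∈ s i, f i x j)
      = ∑ c ∈ Fintype.piFinset s, Matrix.det (Matrix.of fun i j => f i (c i) j) := by
  classical
  have key := (Matrix.detRowAlternating (R := ℤ) (n := Fin N)).toMultilinearMap.map_sum_finset
    (g := fun i x => f i x) (A := s)
  have h1 : (Matrix.of fun i j => ∑ x ∈ s i, f i x j)
      = fun i => ∑ x ∈ s i, f i x := by
    funext i j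
    simp [Finset.sum_apply]
  rw [show Matrix.det (Matrix.of fun i j => ∑ x ∈ s i, f i x j)
      = Matrix.detRowAlternating (Matrix.of fun i j => ∑ x ∈ s i, f i x j) from rfl, h1]
  rw [show (Matrix.detRowAlternating (R := ℤ) (n := Fin N)) (fun i => ∑ x ∈ s i, f i x)
      = (Matrix.detRowAlternating (R := ℤ) (n := Fin N)).toMultilinearMap
          (fun i => ∑ x ∈ s i, f i x) from rfl, key]
  rfl

lemma key (N : ℕ) (T : ℕ) : ∀ (t₁ : ℤ) (a b : Fin N → ℤ), StrictMono a → StrictMono b →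
    (Nat.card (LP N t₁ (t₁ + T) a b) : ℤ)
      = Matrix.det (Matrix.of fun i j : Fin N => binomZ T (b i - a j)) := by
  induction T with
  | zero =>
    intro t₁ a b ha hb
    simpa using card_base (N := N) (t₁ := t₁) ha hb
  | succ T ih =>
    intro t₁ a b ha hb
    classical
    set t₂ : ℤ := t₁ + T with ht₂
    have ht12 : t₁ ≤ t₂ := by omega
    have hcast : t₁ + ((T + 1 : ℕ) : ℤ) = t₂ + 1 := by push_cast; omega
    rw [hcast]
    set A : Finset (Fin N → ℤ) := Fintype.piFinset (fun i => Finset.Icc (b i - 1) (b i)) with hA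
    let Φ : LP N t₁ (t₂ + 1) a b → Σ c : A, LP N t₁ t₂ a (c : Fin N → ℤ) := fun p =>
      ⟨⟨fun i => p.1 i t₂, by
          rw [hA, Fintype.mem_piFinset]
          intro i
          have hstep := p.2.2.2.1 i t₂ (Finset.mem_Ico.2 ⟨ht12, by omega⟩)
          rw [p.2.2.1 i (t₂ + 1) le_rfl] at hstep
          exact Finset.mem_Icc.2 (by omega)⟩,
        ⟨fun i r => if t₂ ≤ r then p.1 i t₂ else p.1 i r, by
          obtain ⟨hst, hen, hstep, hdis⟩ := p.2
          refine ⟨fun i r hr => ?_, fun i r hr => ?_, fun i r hr => ?_,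
            fun i j hij r hr => ?_⟩ <;> dsimp only
          · split_ifs with h
            · have h' : t₂ ≤ t₁ := le_trans h hr
              exact hst i t₂ h'
            · exact hst i r hr
          · rw [if_pos hr]
          · rw [Finset.mem_Ico] at hr
            by_cases h : t₂ ≤ r + 1
            · have h2 : p.1 i (r + 1) = p.1 i t₂ := by rw [show r + 1 = t₂ from by omega]
              rw [if_pos h, if_neg (by omega : ¬ t₂ ≤ r), ← h2]
              exact hstep i r (Finset.mem_Ico.2 ⟨hr.1, by omega⟩)
            · rw [if_neg h, if_neg (by omega : ¬ t₂ ≤ r)]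
              exact hstep i r (Finset.mem_Ico.2 ⟨hr.1, by omega⟩)
          · rw [Finset.mem_Icc] at hr
            split_ifs with h
            · exact hdis i j hij t₂ (Finset.mem_Icc.2 ⟨ht12, by omega⟩)
            · exact hdis i j hij r (Finset.mem_Icc.2 ⟨hr.1, by omega⟩)⟩⟩
    let Ψ : (Σ c : A, LP N t₁ t₂ a (c : Fin N → ℤ)) → LP N t₁ (t₂ + 1) a b := fun s =>
      ⟨fun i r => if t₂ + 1 ≤ r then b i else s.2.1 i r, by
        obtain ⟨⟨c, hc⟩, q, hq⟩ := s
        obtain ⟨hst, hen, hstep, hdis⟩ := hq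
        rw [hA, Fintype.mem_piFinset] at hc
        refine ⟨fun i r hr => ?_, fun i r hr => ?_, fun i r hr => ?_,
          fun i j hij r hr => ?_⟩ <;> dsimp only
        · rw [if_neg (by omega)]
          exact hst i r hr
        · rw [if_pos hr]
        · rw [Finset.mem_Ico] at hr
          by_cases h : t₂ + 1 ≤ r + 1
          · rw [if_pos h, if_neg (by omega : ¬ t₂ + 1 ≤ r)]
            have h1 : r = t₂ := by omega
            subst h1
            have h2 : q i t₂ = c i := hen i t₂ le_rfl
            have h3 : b i - 1 ≤ c i ∧ c i ≤ b i := Finset.mem_Icc.1 (hc i)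
            omega
          · rw [if_neg h, if_neg (by omega : ¬ t₂ + 1 ≤ r)]
            exact hstep i r (Finset.mem_Ico.2 ⟨hr.1, by omega⟩)
        · rw [Finset.mem_Icc] at hr
          by_cases h : t₂ + 1 ≤ r
          · rw [if_pos h, if_pos h]
            exact hb.injective.ne hij
          · rw [if_neg h, if_neg h]
            exact hdis i j hij r (Finset.mem_Icc.2 ⟨hr.1, by omega⟩)⟩
    have hleft : Function.LeftInverse Ψ Φ := by
      intro p
      apply Subtype.ext
      funext i r
      show (if t₂ + 1 ≤ r then b i else if t₂ ≤ r then p.1 i t₂ else p.1 i r) = p.1 i r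
      by_cases h1 : t₂ + 1 ≤ r
      · rw [if_pos h1, p.2.2.1 i r h1]
      by_cases h2 : t₂ ≤ r
      · rw [if_neg h1, if_pos h2, show r = t₂ from by omega]
      · rw [if_neg h1, if_neg h2]
    have hright : Function.RightInverse Ψ Φ := by
      rintro ⟨⟨c, hc⟩, q, hq⟩
      have hc' : (fun i => (Ψ ⟨⟨c, hc⟩, q, hq⟩).1 i t₂) = c := by
        funext i
        show (if t₂ + 1 ≤ t₂ then b i else q i t₂) = c i
        rw [if_neg (by omega)]
        exact hq.2.1 i t₂ le_rfl
      refine Sigma.ext (Subtype.ext hc') ?_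
      refine (Subtype.heq_iff_coe_eq ?_).2 ?_
      · exact fun x => iff_of_eq (congrArg (fun y => Cond N t₁ t₂ a y x) hc')
      · funext i r
        show (if t₂ ≤ r then (if t₂ + 1 ≤ t₂ then b i else q i t₂)
              else (if t₂ + 1 ≤ r then b i else q i r)) = q i r
        by_cases h : t₂ ≤ r
        · rw [if_pos h, if_neg (by omega), hq.2.1 i t₂ le_rfl, hq.2.1 i r h]
        · rw [if_neg h, if_neg (by omega)]
    have e : LP N t₁ (t₂ + 1) a b ≃ Σ c : A, LP N t₁ t₂ a (c : Fin N → ℤ) :=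
      ⟨Φ, Ψ, hleft, hright⟩
    haveI : ∀ c : A, Finite (LP N t₁ t₂ a (c : Fin N → ℤ)) := fun c => lp_finite ht12
    rw [Nat.card_congr e, nat_card_sigma]
    rw [Finset.sum_coe_sort A (fun c => Nat.card (LP N t₁ t₂ a c))]
    have hdet : Matrix.det (Matrix.of fun i j : Fin N => binomZ ((T : ℤ) + 1) (b i - a j))
        = ∑ c ∈ A, Matrix.det (Matrix.of fun i j => binomZ T (c i - a j)) := by
      have hrow : (Matrix.of fun i j : Fin N => binomZ ((T : ℤ) + 1) (b i - a j))
          = Matrix.of fun i j => ∑ x ∈ Finset.Icc (b i - 1) (b i), binomZ T (x - a j) := by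
        funext i j
        have hpair : Finset.Icc (b i - 1) (b i) = {b i - 1, b i} := by
          ext x
          simp only [Finset.mem_Icc, Finset.mem_insert, Finset.mem_singleton]
          omega
        rw [Matrix.of_apply, Matrix.of_apply, hpair,
          Finset.sum_pair (by omega : b i - 1 ≠ b i),
          binomZ_pascal _ _ (by positivity), show b i - 1 - a j = b i - a j - 1 from by ring]
      rw [hrow]
      exact det_sum_rows (fun i => Finset.Icc (b i - 1) (b i)) (fun i x j => binomZ T (x - a j))
    push_cast
    rw [hdet]
    refine Finset.sum_congr rfl (fun c hc => ?_)
    rw [hA, Fintype.mem_piFinset] at hc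
    by_cases hinj : Function.Injective c
    · have hcs : StrictMono c := by
        intro i j hij
        have h1 : b i - 1 ≤ c i ∧ c i ≤ b i := Finset.mem_Icc.1 (hc i)
        have h2 : b j - 1 ≤ c j ∧ c j ≤ b j := Finset.mem_Icc.1 (hc j)
        have h3 := hb hij
        have h4 : c i ≤ c j := h1.2.trans ((Int.le_sub_one_iff.mpr h3).trans h2.1)
        exact lt_of_le_of_ne h4 (hinj.ne hij.ne)
      exact ih t₁ a c ha hcs
    · rw [Function.not_injective_iff] at hinj
      obtain ⟨i, j, hcij, hij⟩ := hinj
      haveI hempty : IsEmpty (LP N t₁ t₂ a c) := by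
        refine ⟨fun p => ?_⟩
        exact p.2.2.2.2 i j hij t₂ (Finset.mem_Icc.2 ⟨ht12, le_rfl⟩)
          (by rw [p.2.2.1 i t₂ le_rfl, p.2.2.1 j t₂ le_rfl]; exact hcij)
      rw [Nat.card_of_isEmpty, Matrix.det_zero_of_row_eq hij]
      · norm_num
      · funext k
        rw [Matrix.of_apply, Matrix.of_apply, hcij]

end LGVAux

/-- Lindström–Gessel–Viennot: the number of non-intersecting families `(p₁,…,p_N)` of
lattice paths, where `p_i` goes from `(t₁, a_i)` to `(t₂, b_i)` with steps
`p(r+1) − p(r) ∈ {0,1}`, equals `det[C(t₂−t₁, b_i − a_j)]`.  (A path is encoded as a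
function `ℤ → ℤ`, normalized to be constant outside `{t₁,…,t₂}` so that it is
determined by its restriction to `{t₁,…,t₂}`.) -/
theorem stmt_0 (N : ℕ) (t₁ t₂ : ℤ) (ht : t₁ < t₂)
    (a b : Fin N → ℤ) (ha : StrictMono a) (hb : StrictMono b) :
    (Nat.card {p : Fin N → ℤ → ℤ //
        (∀ i r, r ≤ t₁ → p i r = a i) ∧
        (∀ i r, t₂ ≤ r → p i r = b i) ∧
        (∀ i, ∀ r ∈ Finset.Ico t₁ t₂, p i (r + 1) - p i r = 0 ∨ p i (r + 1) - p i r = 1) ∧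
        (∀ i j, i ≠ j → ∀ r ∈ Finset.Icc t₁ t₂, p i r ≠ p j r)} : ℤ)
      = Matrix.det (Matrix.of fun i j : Fin N => binomZ (t₂ - t₁) (b i - a j)) := by
  obtain ⟨T, hT⟩ : ∃ T : ℕ, t₂ = t₁ + T := ⟨(t₂ - t₁).toNat, by omega⟩
  subst hT
  rw [show t₁ + (T : ℤ) - t₁ = (T : ℤ) from by ring]
  exact LGVAux.key N T t₁ a b ha hb
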